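/- Let H be a Hilbert space, C : dom(C) ⊆ H → H densely defined and closed, and α ∈ L(H) with α[dom(C)] ⊆ dom(C) and [α,C] continuous. Then α* leaves dom(C*) invariant and the adjoint of the commutator satisfies [α,C]* = cl([C*, α*]). -/

import Mathlib

open Filter Topology

noncomputable section

/-- Density of the adjoint domain of a densely defined closed operator. -/
theorem dense_adjoint_domain_of_isClosed
    {H : Type*} [NormedAddCommGroup H] [InnerProductSpace ℝ H] [CompleteSpace H]
    (C : H →ₗ.[ℝ] H) (hdense : Dense (C.domain : Set H)) (hclosed : C.IsClosed) :
    Dense (C.adjoint.domain : Set H) := by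
  rw [Submodule.dense_iff_topologicalClosure_eq_top, Submodule.topologicalClosure_eq_top_iff]
  rw [Submodule.eq_bot_iff]
  intro v hv
  rw [Submodule.mem_orthogonal] at hv
  set e : WithLp 2 (H × H) ≃L[ℝ] H × H := WithLp.prodContinuousLinearEquiv 2 ℝ H H
  set G : Submodule ℝ (WithLp 2 (H × H)) := C.graph.comap (e : WithLp 2 (H × H) →ₗ[ℝ] H × H)
  have hGclosed : IsClosed (G : Set (WithLp 2 (H × H))) :=
    hclosed.preimage e.continuous
  have hz : e.symm (0, v) ∈ Gᗮᗮ := by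
    rw [Submodule.mem_orthogonal]
    intro w hw
    rw [Submodule.mem_orthogonal] at hw
    have hq : (e w).2 ∈ C.adjoint.domain := by
      apply LinearPMap.mem_adjoint_domain_of_exists
      refine ⟨-(e w).1, fun x => ?_⟩
      have hx : e.symm ((x : H), C x) ∈ G := by
        simpa [G, Submodule.mem_comap] using C.mem_graph x
      have h5 := hw _ hx
      rw [WithLp.prod_inner_apply] at h5
      have h1 : (e.symm ((x : H), C x)).ofLp.1 = (x : H) := rfl
      have h2 : (e.symm ((x : H), C x)).ofLp.2 = C x := rfl
      have h3 : w.ofLp.1 = (e w).1 := rfl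
      have h4 : w.ofLp.2 = (e w).2 := rfl
      rw [h1, h2, h3, h4] at h5
      rw [inner_neg_left]
      have c1 := real_inner_comm ((x : H)) (e w).1
      have c2 := real_inner_comm ((C x : H)) (e w).2
      linarith
    have h0 := hv _ hq
    rw [WithLp.prod_inner_apply]
    have h1 : (e.symm ((0 : H), v)).ofLp.1 = (0 : H) := rfl
    have h2 : (e.symm ((0 : H), v)).ofLp.2 = v := rfl
    have h4 : w.ofLp.2 = (e w).2 := rfl
    rw [h1, h2, h4, inner_zero_right, h0, zero_add]
  rw [Submodule.orthogonal_orthogonal_eq_closure,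
    hGclosed.submodule_topologicalClosure_eq] at hz
  have : ((0 : H), v) ∈ C.graph := by
    have := Submodule.mem_comap.mp hz
    simpa using this
  exact C.graph_fst_eq_zero_snd this rfl

/-- for `C` densely defined and closed and bounded `α` leaving `dom C`
invariant with continuous commutator `[α,C]` (continuous extension `T`), the adjoint `α*`
leaves `dom C*` invariant and `[α,C]* = cl([C*, α*])`, i.e. the bounded operator `T*`
agrees on the (dense) domain of `C*` with `C*α* - α*C*`. -/
theorem adjoint_commutator_eq
    {H : Type*} [NormedAddCommGroup H] [InnerProductSpace ℝ H] [CompleteSpace H]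
    (C : H →ₗ.[ℝ] H) (hdense : Dense (C.domain : Set H)) (hclosed : C.IsClosed)
    (α : H →L[ℝ] H) (hα : ∀ x ∈ C.domain, α x ∈ C.domain)
    (T : H →L[ℝ] H)
    (hT : ∀ x : C.domain, T (x : H) = α (C x) - C ⟨α x, hα x x.2⟩) :
    Dense (C.adjoint.domain : Set H) ∧
      ∀ v : C.adjoint.domain,
        ∃ h : ContinuousLinearMap.adjoint α (v : H) ∈ C.adjoint.domain,
          ContinuousLinearMap.adjoint T (v : H) =
            C.adjoint ⟨ContinuousLinearMap.adjoint α (v : H), h⟩ -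
              ContinuousLinearMap.adjoint α (C.adjoint v) := by
  refine ⟨dense_adjoint_domain_of_isClosed C hdense hclosed, fun v => ?_⟩
  have hfa := LinearPMap.adjoint_isFormalAdjoint (T := C) hdense
  -- key identity: for all x in dom C, ⟪T* v + α* (C* v), x⟫ = ⟪α* v, C x⟫
  have key : ∀ x : C.domain,
      (inner ℝ (ContinuousLinearMap.adjoint T (v : H) +
        ContinuousLinearMap.adjoint α (C.adjoint v)) (x : H) : ℝ) =
      inner ℝ (ContinuousLinearMap.adjoint α (v : H)) (C x) := by
    intro x
    have h1 : (inner ℝ (ContinuousLinearMap.adjoint α (v : H)) (C x) : ℝ)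
        = inner ℝ (v : H) (α (C x)) := ContinuousLinearMap.adjoint_inner_left α _ _
    have h2 : α (C x) = T (x : H) + C ⟨α x, hα x x.2⟩ := by rw [hT x]; abel
    have h3 : (inner ℝ (v : H) (T (x : H)) : ℝ)
        = inner ℝ (ContinuousLinearMap.adjoint T (v : H)) (x : H) :=
      (ContinuousLinearMap.adjoint_inner_left T _ _).symm
    have h4 : (inner ℝ (C.adjoint v) (α (x : H)) : ℝ) = inner ℝ (v : H) (C ⟨α x, hα x x.2⟩) :=
      hfa v ⟨α x, hα x x.2⟩
    have h5 : (inner ℝ (ContinuousLinearMap.adjoint α (C.adjoint v)) (x : H) : ℝ)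
        = inner ℝ (C.adjoint v) (α (x : H)) := ContinuousLinearMap.adjoint_inner_left α _ _
    rw [inner_add_left, h1, h2, inner_add_right, h3, h5, h4]
  have h : ContinuousLinearMap.adjoint α (v : H) ∈ C.adjoint.domain := by
    apply LinearPMap.mem_adjoint_domain_of_exists
    exact ⟨_, key⟩
  refine ⟨h, ?_⟩
  have := LinearPMap.adjoint_apply_eq hdense (⟨ContinuousLinearMap.adjoint α (v : H), h⟩ :
    C.adjoint.domain) (x₀ := ContinuousLinearMap.adjoint T (v : H) +
      ContinuousLinearMap.adjoint α (C.adjoint v)) key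
  rw [this]; abel
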